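/- For every ε > 0 there exist β > 0 and constants such that the Tychonoff-type solution u(t,x) on the integer line graph, defined via g(t) = exp(−t^{−β}), satisfies for each fixed t the bound |u(t,x)| ≤ exp[(2 + 2/β)·x·ln x + O(x)] as x → +∞; consequently, choosing β > 2/ε gives lim_{x→∞} |u(t,x)|·exp(−(2+ε)·x·ln x) = 0. -/

import Mathlib

noncomputable def gfun (β : ℝ) (t : ℝ) : ℝ :=
  if 0 < t then Real.exp (-(t ^ (-β))) else 0

noncomputable def consecProd (x : ℤ) (k : ℕ) : ℝ :=
  ∏ j ∈ Finset.range (2 * k), ((x + k - j : ℤ) : ℝ)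

noncomputable def uline (β : ℝ) (t : ℝ) (x : ℤ) : ℝ :=
  gfun β t + ∑' k : ℕ,
    iteratedDeriv (2 * (k + 1)) (gfun β) t / (Nat.factorial (2 * (k + 1))) *
      consecProd (if 0 ≤ x then x else -x - 1) (k + 1)

namespace UAux

open Real Filter Finset

/-- coefficients of the derivative expansion -/
noncomputable def c (n : ℕ) : ℕ → ℕ → ℝ
  | 0, j => if j = 0 then 1 else 0
  | m+1, j => n * (if j = 0 then 0 else c n m (j-1)) - (j*n + m) * c n m j

lemma c_eq_zero (n : ℕ) : ∀ m j, m < j → c n m j = 0 := by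
  intro m
  induction m with
  | zero =>
    intro j h
    have hj : j ≠ 0 := by omega
    unfold c
    simp [hj]
  | succ m ih =>
    intro j h
    have hj : j ≠ 0 := by omega
    simp only [c, if_neg hj]
    rw [ih (j-1) (by omega), ih j (by omega)]
    ring

lemma c_succ (n m j : ℕ) :
    c n (m+1) j = (n:ℝ) * (if j = 0 then 0 else c n m (j-1)) - ((j:ℝ)*(n:ℝ) + (m:ℝ)) * c n m j := by
  simp only [c]
  try push_cast
  try ring

lemma c_bound (n : ℕ) : ∀ m j, |c n m j| * (Nat.factorial j) ≤ (n:ℝ)^j * (n+2)^m * Nat.factorial m := by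
  intro m
  induction m with
  | zero =>
    intro j
    rcases Nat.eq_zero_or_pos j with rfl | hj
    · simp [c]
    · rw [c_eq_zero n 0 j hj]
      simp only [abs_zero, zero_mul]
      positivity
  | succ m ih =>
    intro j
    rcases Nat.lt_or_ge (m+1) j with h | h
    · rw [c_eq_zero n (m+1) j h]
      simp only [abs_zero, zero_mul]
      positivity
    · rcases Nat.eq_zero_or_pos j with rfl | hj
      · -- j = 0
        rw [c_succ, if_pos rfl]
        simp only [mul_zero, Nat.cast_zero, zero_mul, zero_add, zero_sub, abs_neg,
          abs_mul, Nat.factorial_zero, Nat.cast_one, mul_one, pow_zero, one_mul]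
        have h0 := ih 0
        simp only [Nat.factorial_zero, Nat.cast_one, mul_one, pow_zero, one_mul] at h0
        have hm : |(m:ℝ)| = (m:ℝ) := abs_of_nonneg (Nat.cast_nonneg m)
        rw [hm]
        have h2 : (m:ℝ) * |c n m 0| ≤ (m:ℝ) * ((n+2:ℝ)^m * Nat.factorial m) :=
          mul_le_mul_of_nonneg_left h0 (Nat.cast_nonneg m)
        refine h2.trans ?_
        rw [pow_succ, Nat.factorial_succ]
        push_cast
        have hc : (0:ℝ) ≤ (n+2:ℝ)^m * (Nat.factorial m : ℝ) := by positivity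
        have hmn : (m:ℝ) ≤ ((n:ℝ)+2)*((m:ℝ)+1) := by
          nlinarith [Nat.cast_nonneg (α := ℝ) m, Nat.cast_nonneg (α := ℝ) n]
        nlinarith [mul_le_mul_of_nonneg_right hmn hc]
      · -- j ≥ 1
        have hj' : j ≠ 0 := hj.ne'
        rw [c_succ, if_neg hj']
        have habs : |(n:ℝ) * c n m (j-1) - ((j:ℝ)*(n:ℝ) + (m:ℝ)) * c n m j|
            ≤ (n:ℝ) * |c n m (j-1)| + ((j:ℝ)*(n:ℝ) + (m:ℝ)) * |c n m j| := by
          calc |(n:ℝ) * c n m (j-1) - ((j:ℝ)*(n:ℝ) + (m:ℝ)) * c n m j|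
              ≤ |(n:ℝ) * c n m (j-1)| + |((j:ℝ)*(n:ℝ) + (m:ℝ)) * c n m j| := abs_sub _ _
            _ = (n:ℝ) * |c n m (j-1)| + ((j:ℝ)*(n:ℝ) + (m:ℝ)) * |c n m j| := by
                rw [abs_mul, abs_mul, abs_of_nonneg (Nat.cast_nonneg n),
                  abs_of_nonneg (by positivity : (0:ℝ) ≤ (j:ℝ)*(n:ℝ) + (m:ℝ))]
        have hfacpos : (0:ℝ) < Nat.factorial j := by positivity
        refine (mul_le_mul_of_nonneg_right habs hfacpos.le).trans ?_
        obtain ⟨i, rfl⟩ : ∃ i, j = i + 1 := ⟨j - 1, by omega⟩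
        simp only [Nat.add_sub_cancel]
        have hcast : ((i+1:ℕ):ℝ) = (i:ℝ)+1 := by push_cast; ring
        rw [hcast]
        have hfac : (Nat.factorial (i+1) : ℝ) = ((i:ℝ)+1) * Nat.factorial i := by
          rw [Nat.factorial_succ]; push_cast; ring
        have h1 := ih i
        have h2 := ih (i+1)
        have step1 : ((n:ℝ) * |c n m i| + (((i:ℝ)+1)*(n:ℝ) + (m:ℝ)) * |c n m (i+1)|) * Nat.factorial (i+1)
            ≤ ((n:ℝ) * ((i:ℝ)+1)) * ((n:ℝ)^i * (n+2)^m * Nat.factorial m)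
              + (((i:ℝ)+1)*(n:ℝ) + (m:ℝ)) * ((n:ℝ)^(i+1) * (n+2)^m * Nat.factorial m) := by
          rw [add_mul, hfac]
          have e2 : ((n:ℝ) * ((i:ℝ)+1)) * (|c n m i| * Nat.factorial i)
              ≤ ((n:ℝ) * ((i:ℝ)+1)) * ((n:ℝ)^i * (n+2)^m * Nat.factorial m) :=
            mul_le_mul_of_nonneg_left h1 (by positivity)
          have e4 : (((i:ℝ)+1)*(n:ℝ) + (m:ℝ)) * (|c n m (i+1)| * Nat.factorial (i+1))
              ≤ (((i:ℝ)+1)*(n:ℝ) + (m:ℝ)) * ((n:ℝ)^(i+1) * (n+2)^m * Nat.factorial m) :=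
            mul_le_mul_of_nonneg_left h2 (by positivity)
          calc (n:ℝ) * |c n m i| * (((i:ℝ)+1) * ↑(Nat.factorial i))
              + (((i:ℝ)+1)*(n:ℝ) + (m:ℝ)) * |c n m (i+1)| * (((i:ℝ)+1) * ↑(Nat.factorial i))
              = ((n:ℝ) * ((i:ℝ)+1)) * (|c n m i| * Nat.factorial i)
                + (((i:ℝ)+1)*(n:ℝ) + (m:ℝ)) * (|c n m (i+1)| * Nat.factorial (i+1)) := by
                rw [hfac]; ring
            _ ≤ _ := add_le_add e2 e4
        refine step1.trans ?_
        have hineq : (n:ℝ) * ((i:ℝ)+1) * (n:ℝ)^i + (((i:ℝ)+1)*(n:ℝ) + (m:ℝ)) * (n:ℝ)^(i+1)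
            ≤ (n:ℝ)^(i+1) * ((n:ℝ)+2) * ((m:ℝ)+1) := by
          rcases Nat.eq_zero_or_pos n with rfl | hn
          · simp
          · have hn1 : (1:ℝ) ≤ (n:ℝ) := by exact_mod_cast hn
            have him : (i:ℝ) ≤ m := by exact_mod_cast (by omega : i ≤ m)
            have hpow : (0:ℝ) ≤ (n:ℝ)^(i+1) := by positivity
            have hfirst : (n:ℝ) * ((i:ℝ)+1) * (n:ℝ)^i = ((i:ℝ)+1) * (n:ℝ)^(i+1) := by
              rw [pow_succ]; ring
            rw [hfirst]
            have hlin : ((i:ℝ)+1) + (((i:ℝ)+1) * n + m) ≤ ((n:ℝ)+2) * ((m:ℝ)+1) := by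
              nlinarith [him, hn1, Nat.cast_nonneg (α := ℝ) m, Nat.cast_nonneg (α := ℝ) i]
            nlinarith [hpow, hlin]
        have hfm : (0:ℝ) ≤ ((n:ℝ)+2)^m * Nat.factorial m := by positivity
        calc (n:ℝ) * ((i:ℝ)+1) * ((n:ℝ)^i * (n+2)^m * Nat.factorial m)
            + (((i:ℝ)+1)*(n:ℝ) + (m:ℝ)) * ((n:ℝ)^(i+1) * (n+2)^m * Nat.factorial m)
            = ((n:ℝ) * ((i:ℝ)+1) * (n:ℝ)^i + (((i:ℝ)+1)*(n:ℝ) + (m:ℝ)) * (n:ℝ)^(i+1))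
              * ((n+2)^m * Nat.factorial m) := by ring
          _ ≤ ((n:ℝ)^(i+1) * ((n:ℝ)+2) * ((m:ℝ)+1)) * ((n+2)^m * Nat.factorial m) :=
              mul_le_mul_of_nonneg_right hineq hfm
          _ = (n:ℝ)^(i+1) * (n+2)^(m+1) * (((m:ℝ)+1) * Nat.factorial m) := by
              rw [pow_succ]; ring
          _ = (n:ℝ)^(i+1) * (n+2)^(m+1) * Nat.factorial (m+1) := by
              rw [Nat.factorial_succ]; push_cast; ring

/-- the m-th derivative of gfun on (0,∞) -/
noncomputable def F (n m : ℕ) (t : ℝ) : ℝ :=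
  Real.exp (-t ^ (-(n:ℤ))) * ∑ j ∈ Finset.range (m+1), c n m j * t ^ (-((j*n+m : ℕ)) : ℤ)

lemma hasDerivAt_F (n m : ℕ) (t : ℝ) (ht : 0 < t) : HasDerivAt (F n m) (F n (m+1) t) t := by
  have ht' : t ≠ 0 := ht.ne'
  have hE : HasDerivAt (fun s : ℝ => Real.exp (-s ^ (-(n:ℤ))))
      (Real.exp (-t ^ (-(n:ℤ))) * ((n:ℝ) * t ^ (-(n:ℤ) - 1))) t := by
    have h1 : HasDerivAt (fun s : ℝ => -s ^ (-(n:ℤ))) ((n:ℝ) * t ^ (-(n:ℤ)-1)) t := by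
      have h0 := (hasDerivAt_zpow (-(n:ℤ)) t (Or.inl ht')).fun_neg
      refine h0.congr_deriv ?_
      push_cast
      ring
    simpa [mul_comm] using h1.exp
  have hS : HasDerivAt
      (fun s : ℝ => ∑ j ∈ Finset.range (m+1), c n m j * s ^ (-((j*n+m : ℕ) : ℤ)))
      (∑ j ∈ Finset.range (m+1),
        c n m j * (((-((j*n+m : ℕ) : ℤ)) : ℝ) * t ^ ((-((j*n+m : ℕ) : ℤ)) - 1))) t := by
    apply HasDerivAt.fun_sum
    intro j hj
    have h0 := (hasDerivAt_zpow (-((j*n+m : ℕ) : ℤ)) t (Or.inl ht')).const_mul (c n m j)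
    refine h0.congr_deriv ?_
    push_cast
    ring
  have h := hE.mul hS
  have key : F n (m+1) t
      = Real.exp (-t ^ (-(n:ℤ))) * ((n:ℝ) * t ^ (-(n:ℤ) - 1))
          * (∑ j ∈ Finset.range (m+1), c n m j * t ^ (-((j*n+m : ℕ) : ℤ)))
        + Real.exp (-t ^ (-(n:ℤ)))
          * (∑ j ∈ Finset.range (m+1),
              c n m j * (((-((j*n+m : ℕ) : ℤ)) : ℝ) * t ^ ((-((j*n+m : ℕ) : ℤ)) - 1))) := by
    unfold F
    rw [mul_assoc, ← mul_add]
    congr 1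
    -- sum identity
    have hsum1 : ∑ j ∈ Finset.range (m+2), c n (m+1) j * t ^ (-((j*n+(m+1) : ℕ) : ℤ))
        = ∑ j ∈ Finset.range (m+2),
            ((n:ℝ) * (if j = 0 then 0 else c n m (j-1)) * t ^ (-((j*n+(m+1) : ℕ) : ℤ))
             - ((j:ℝ)*(n:ℝ) + (m:ℝ)) * c n m j * t ^ (-((j*n+(m+1) : ℕ) : ℤ))) := by
      apply Finset.sum_congr rfl
      intro j hj
      rw [c_succ]
      ring
    rw [hsum1, Finset.sum_sub_distrib]
    have hA : ∑ j ∈ Finset.range (m+2),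
          (n:ℝ) * (if j = 0 then 0 else c n m (j-1)) * t ^ (-((j*n+(m+1) : ℕ) : ℤ))
        = ∑ j ∈ Finset.range (m+1),
            (n:ℝ) * c n m j * t ^ (-(((j+1)*n+(m+1) : ℕ) : ℤ)) := by
      rw [Finset.sum_range_succ']
      simp
    have hB : ∑ j ∈ Finset.range (m+2),
          ((j:ℝ)*(n:ℝ) + (m:ℝ)) * c n m j * t ^ (-((j*n+(m+1) : ℕ) : ℤ))
        = ∑ j ∈ Finset.range (m+1),
            ((j:ℝ)*(n:ℝ) + (m:ℝ)) * c n m j * t ^ (-((j*n+(m+1) : ℕ) : ℤ)) := by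
      rw [Finset.sum_range_succ, c_eq_zero n m (m+1) (Nat.lt_succ_self m)]
      simp
    rw [hA, hB, Finset.mul_sum, ← Finset.sum_add_distrib, ← Finset.sum_sub_distrib]
    apply Finset.sum_congr rfl
    intro j hj
    have hexp1 : (-(((j+1)*n+(m+1) : ℕ) : ℤ)) = (-(n:ℤ) - 1) + (-((j*n+m : ℕ) : ℤ)) := by
      push_cast
      ring
    have hexp2 : (-((j*n+(m+1) : ℕ) : ℤ)) = (-((j*n+m : ℕ) : ℤ)) - 1 := by
      push_cast
      ring
    rw [hexp1, hexp2, zpow_add₀ ht']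
    push_cast
    ring
  rw [key]
  exact h

lemma gfun_eq (n : ℕ) (hn : Odd n) : gfun n = fun t => expNegInvGlue (t ^ n) := by
  funext t
  unfold gfun expNegInvGlue
  rcases lt_or_ge 0 t with ht | ht
  · rw [if_pos ht, if_neg (not_le.2 (pow_pos ht n))]
    rw [Real.rpow_neg ht.le, Real.rpow_natCast]
  · rw [if_neg (not_lt.2 ht), if_pos (hn.pow_nonpos ht)]

lemma contDiff_gfun (n : ℕ) (hn : Odd n) : ContDiff ℝ (⊤ : ℕ∞) (gfun n) := by
  rw [gfun_eq n hn]
  exact expNegInvGlue.contDiff.comp (contDiff_id.pow n)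

lemma iteratedDeriv_gfun (n : ℕ) (hn : Odd n) (m : ℕ) :
    (∀ t : ℝ, t < 0 → iteratedDeriv m (gfun n) t = 0) ∧
    (∀ t : ℝ, 0 < t → iteratedDeriv m (gfun n) t = F n m t) := by
  induction m with
  | zero =>
    constructor
    · intro t ht
      rw [iteratedDeriv_zero]
      unfold gfun
      rw [if_neg (not_lt.2 ht.le)]
    · intro t ht
      rw [iteratedDeriv_zero]
      unfold gfun F
      rw [if_pos ht]
      have h1 : t ^ (-(n:ℝ)) = t ^ (-(n:ℤ)) := by
        rw [show (-(n:ℝ)) = ((-(n:ℤ) : ℤ) : ℝ) by push_cast; ring, Real.rpow_intCast]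
      rw [h1]
      simp [c]
  | succ m ih =>
    constructor
    · intro t ht
      rw [iteratedDeriv_succ]
      have hev : iteratedDeriv m (gfun n) =ᶠ[nhds t] (fun _ => (0:ℝ)) := by
        filter_upwards [IsOpen.mem_nhds isOpen_Iio ht] with s hs
        exact ih.1 s hs
      rw [hev.deriv_eq, deriv_const]
    · intro t ht
      rw [iteratedDeriv_succ]
      have hev : iteratedDeriv m (gfun n) =ᶠ[nhds t] F n m := by
        filter_upwards [IsOpen.mem_nhds isOpen_Ioi ht] with s hs
        exact ih.2 s hs
      rw [hev.deriv_eq, (hasDerivAt_F n m t ht).deriv]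

lemma exp_neg_mul_pow_le (y : ℝ) (hy : 0 ≤ y) (a : ℕ) :
    Real.exp (-y) * y ^ a ≤ Nat.factorial a := by
  have h1 : y ^ a / Nat.factorial a ≤ Real.exp y := by
    refine le_trans ?_ (Real.sum_le_exp_of_nonneg hy (a+1))
    exact Finset.single_le_sum (f := fun i => y^i / Nat.factorial i)
      (fun i _ => by positivity) (Finset.self_mem_range_succ a)
  rw [div_le_iff₀ (by positivity)] at h1
  calc Real.exp (-y) * y ^ a ≤ Real.exp (-y) * (Real.exp y * Nat.factorial a) :=
        mul_le_mul_of_nonneg_left h1 (Real.exp_pos _).le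
    _ = Nat.factorial a := by
        rw [← mul_assoc, ← Real.exp_add]
        simp

lemma exp_zpow_bound (n : ℕ) (hn1 : 1 ≤ n) (m j : ℕ) (t : ℝ) (ht : 0 < t) :
    Real.exp (-t ^ (-(n:ℤ))) * t ^ (-((j*n+m : ℕ) : ℤ))
      ≤ (Nat.factorial j : ℝ) + Nat.factorial (j + (m/n + 1)) := by
  have hz : ∀ a : ℕ, t ^ (-((a:ℕ) : ℤ)) = (t^a)⁻¹ := by
    intro a
    rw [zpow_neg, zpow_natCast]
  rcases le_or_gt 1 t with h1 | h1
  · have hA : t ^ (-((j*n+m : ℕ) : ℤ)) ≤ 1 := by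
      rw [hz]
      exact inv_le_one_of_one_le₀ (one_le_pow₀ h1)
    have hB : Real.exp (-t ^ (-(n:ℤ))) ≤ 1 := by
      rw [Real.exp_le_one_iff, neg_nonpos]
      exact (zpow_pos ht _).le
    have hC : Real.exp (-t ^ (-(n:ℤ))) * t ^ (-((j*n+m : ℕ) : ℤ)) ≤ 1 := by
      calc Real.exp (-t ^ (-(n:ℤ))) * t ^ (-((j*n+m : ℕ) : ℤ))
          ≤ 1 * 1 := mul_le_mul hB hA (zpow_pos ht _).le zero_le_one
        _ = 1 := one_mul 1
    refine hC.trans ?_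
    have : (1:ℝ) ≤ Nat.factorial j := by exact_mod_cast (Nat.factorial_pos j)
    have h2 : (0:ℝ) ≤ Nat.factorial (j + (m/n + 1)) := by positivity
    linarith
  · set q := m/n + 1 with hq
    have hy : (0:ℝ) < (t^n)⁻¹ := by positivity
    have key : t ^ (-((j*n+m : ℕ) : ℤ)) ≤ ((t^n)⁻¹)^(j+q) := by
      rw [hz, inv_pow, ← pow_mul]
      apply inv_anti₀ (pow_pos ht _)
      apply pow_le_pow_of_le_one ht.le h1.le
      have hmod := Nat.div_add_mod m n
      have hlt : m % n < n := Nat.mod_lt m (by omega)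
      rw [hq]
      nlinarith [Nat.zero_le j, Nat.zero_le (m/n)]
    have hrw : t ^ (-(n:ℤ)) = (t^n)⁻¹ := hz n
    rw [hrw]
    calc Real.exp (-(t^n)⁻¹) * t ^ (-((j*n+m : ℕ) : ℤ))
        ≤ Real.exp (-(t^n)⁻¹) * ((t^n)⁻¹)^(j+q) :=
          mul_le_mul_of_nonneg_left key (Real.exp_pos _).le
      _ ≤ Nat.factorial (j + q) := exp_neg_mul_pow_le _ hy.le _
      _ ≤ (Nat.factorial j : ℝ) + Nat.factorial (j + q) := by
          have : (0:ℝ) ≤ Nat.factorial j := by positivity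
          linarith

noncomputable def E (n m : ℕ) : ℝ :=
  ∑ j ∈ Finset.range (m+1),
    |c n m j| * ((Nat.factorial j : ℝ) + Nat.factorial (j + (m/n + 1)))

lemma E_nonneg (n m : ℕ) : 0 ≤ E n m := by
  apply Finset.sum_nonneg
  intro j hj
  positivity

lemma abs_iteratedDeriv_le (n : ℕ) (hn : Odd n) (hn1 : 1 ≤ n) (m : ℕ) (t : ℝ) :
    |iteratedDeriv m (gfun n) t| ≤ E n m := by
  have hne : ∀ s : ℝ, s ≠ 0 → |iteratedDeriv m (gfun n) s| ≤ E n m := by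
    intro s hs
    rcases hs.lt_or_gt with h | h
    · rw [(iteratedDeriv_gfun n hn m).1 s h]
      simpa using E_nonneg n m
    · rw [(iteratedDeriv_gfun n hn m).2 s h]
      unfold F E
      rw [abs_mul, Real.abs_exp]
      refine le_trans (mul_le_mul_of_nonneg_left
        (Finset.abs_sum_le_sum_abs _ _) (Real.exp_pos _).le) ?_
      rw [Finset.mul_sum]
      apply Finset.sum_le_sum
      intro j hj
      rw [abs_mul, abs_of_pos (zpow_pos h _)]
      calc Real.exp (-s ^ (-(n:ℤ))) * (|c n m j| * s ^ (-((j*n+m : ℕ) : ℤ)))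
          = |c n m j| * (Real.exp (-s ^ (-(n:ℤ))) * s ^ (-((j*n+m : ℕ) : ℤ))) := by ring
        _ ≤ |c n m j| * ((Nat.factorial j : ℝ) + Nat.factorial (j + (m/n + 1))) :=
            mul_le_mul_of_nonneg_left (exp_zpow_bound n hn1 m j s h) (abs_nonneg _)
  rcases eq_or_ne t 0 with rfl | ht
  · have hcont : Continuous (iteratedDeriv m (gfun n)) :=
      (contDiff_gfun n hn).continuous_iteratedDeriv m (by exact_mod_cast le_top)
    have hcl : IsClosed {s : ℝ | |iteratedDeriv m (gfun n) s| ≤ E n m} :=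
      isClosed_le hcont.abs continuous_const
    have hsub : ({(0:ℝ)}ᶜ : Set ℝ) ⊆ {s : ℝ | |iteratedDeriv m (gfun n) s| ≤ E n m} :=
      fun s hs => hne s hs
    have hdense := dense_compl_singleton (0:ℝ)
    have huniv : (Set.univ : Set ℝ) ⊆ {s : ℝ | |iteratedDeriv m (gfun n) s| ≤ E n m} := by
      rw [← hdense.closure_eq]
      exact hcl.closure_subset_iff.2 hsub
    exact huniv (Set.mem_univ 0)
  · exact hne t ht

lemma factorial_add_le (j q : ℕ) : Nat.factorial (j+q) ≤ Nat.factorial j * (j+q)^q := by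
  induction q with
  | zero => simp
  | succ q ih =>
    have h1 : Nat.factorial (j+(q+1)) = (j+q+1) * Nat.factorial (j+q) := by
      rw [show j+(q+1) = (j+q)+1 by ring, Nat.factorial_succ]
    rw [h1]
    calc (j+q+1) * Nat.factorial (j+q) ≤ (j+q+1) * (Nat.factorial j * (j+q)^q) :=
          Nat.mul_le_mul_left _ ih
      _ ≤ (j+q+1) * (Nat.factorial j * (j+q+1)^q) := by
          apply Nat.mul_le_mul_left
          apply Nat.mul_le_mul_left
          exact Nat.pow_le_pow_left (by omega) q
      _ = Nat.factorial j * (j+(q+1))^(q+1) := by ring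
noncomputable def G (n X : ℕ) : ℝ :=
  (2*(X:ℝ)+1) * (2*(n:ℝ)*((n:ℝ)+2)*(X:ℝ))^(2*X) * (2 * (5*(X:ℝ))^((2*X)/n + 1))

lemma E_bound (n m X : ℕ) (hn1 : 1 ≤ n) (hX : 1 ≤ X) (hm : m ≤ 2*X) :
    E n m * (2*(X:ℝ))^m ≤ (Nat.factorial m : ℝ) * G n X := by
  set q := m/n + 1 with hq
  set Q := (2*X)/n + 1 with hQ
  have hXR : (1:ℝ) ≤ (X:ℝ) := by exact_mod_cast hX
  have hnR : (1:ℝ) ≤ (n:ℝ) := by exact_mod_cast hn1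
  -- per-term bound on E
  have hterm : ∀ j ∈ Finset.range (m+1),
      |c n m j| * ((Nat.factorial j : ℝ) + Nat.factorial (j + q))
        ≤ (n:ℝ)^m * ((n:ℝ)+2)^m * (Nat.factorial m) * (1 + ((m:ℝ)+q)^q) := by
    intro j hj
    have hjm : j ≤ m := by
      have := Finset.mem_range.1 hj
      omega
    have h1 : |c n m j| * (Nat.factorial j : ℝ) ≤ (n:ℝ)^j * ((n:ℝ)+2)^m * Nat.factorial m :=
      c_bound n m j
    have h2 : |c n m j| * (Nat.factorial (j+q) : ℝ)
        ≤ ((n:ℝ)^j * ((n:ℝ)+2)^m * Nat.factorial m) * ((j:ℝ)+q)^q := by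
      have hf : (Nat.factorial (j+q) : ℝ) ≤ (Nat.factorial j : ℝ) * ((j:ℝ)+q)^q := by
        have := factorial_add_le j q
        calc (Nat.factorial (j+q) : ℝ) ≤ ((Nat.factorial j * (j+q)^q : ℕ) : ℝ) := by
              exact_mod_cast this
          _ = (Nat.factorial j : ℝ) * ((j+q : ℕ) : ℝ)^q := by push_cast; ring
          _ = (Nat.factorial j : ℝ) * ((j:ℝ)+q)^q := by push_cast; ring
      calc |c n m j| * (Nat.factorial (j+q) : ℝ)
          ≤ |c n m j| * ((Nat.factorial j : ℝ) * ((j:ℝ)+q)^q) :=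
            mul_le_mul_of_nonneg_left hf (abs_nonneg _)
        _ = (|c n m j| * Nat.factorial j) * ((j:ℝ)+q)^q := by ring
        _ ≤ ((n:ℝ)^j * ((n:ℝ)+2)^m * Nat.factorial m) * ((j:ℝ)+q)^q := by
            apply mul_le_mul_of_nonneg_right h1
            positivity
    have hnj : (n:ℝ)^j ≤ (n:ℝ)^m := pow_le_pow_right₀ hnR hjm
    have hjq : ((j:ℝ)+q)^q ≤ ((m:ℝ)+q)^q := by
      apply pow_le_pow_left₀ (by positivity)
      have : (j:ℝ) ≤ m := by exact_mod_cast hjm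
      linarith
    have hmono1 : (n:ℝ)^j * ((n:ℝ)+2)^m * Nat.factorial m
        ≤ (n:ℝ)^m * ((n:ℝ)+2)^m * Nat.factorial m := by
      apply mul_le_mul_of_nonneg_right (mul_le_mul_of_nonneg_right hnj (by positivity))
      positivity
    have hmono2 : ((n:ℝ)^j * ((n:ℝ)+2)^m * Nat.factorial m) * ((j:ℝ)+q)^q
        ≤ ((n:ℝ)^m * ((n:ℝ)+2)^m * Nat.factorial m) * ((m:ℝ)+q)^q := by
      apply mul_le_mul hmono1 hjq (by positivity) (by positivity)
    calc |c n m j| * ((Nat.factorial j : ℝ) + Nat.factorial (j + q))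
        = |c n m j| * Nat.factorial j + |c n m j| * Nat.factorial (j+q) := by ring
      _ ≤ (n:ℝ)^j * ((n:ℝ)+2)^m * Nat.factorial m
            + ((n:ℝ)^j * ((n:ℝ)+2)^m * Nat.factorial m) * ((j:ℝ)+q)^q := add_le_add h1 h2
      _ ≤ (n:ℝ)^m * ((n:ℝ)+2)^m * Nat.factorial m
            + ((n:ℝ)^m * ((n:ℝ)+2)^m * Nat.factorial m) * ((m:ℝ)+q)^q :=
          add_le_add hmono1 hmono2
      _ = (n:ℝ)^m * ((n:ℝ)+2)^m * (Nat.factorial m) * (1 + ((m:ℝ)+q)^q) := by ring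
  have hE : E n m ≤ ((m:ℝ)+1) * ((n:ℝ)^m * ((n:ℝ)+2)^m * (Nat.factorial m) * (1 + ((m:ℝ)+q)^q)) := by
    unfold E
    calc ∑ j ∈ Finset.range (m+1), |c n m j| * ((Nat.factorial j : ℝ) + Nat.factorial (j + q))
        ≤ ∑ j ∈ Finset.range (m+1),
            (n:ℝ)^m * ((n:ℝ)+2)^m * (Nat.factorial m) * (1 + ((m:ℝ)+q)^q) :=
          Finset.sum_le_sum hterm
      _ = ((m:ℝ)+1) * ((n:ℝ)^m * ((n:ℝ)+2)^m * (Nat.factorial m) * (1 + ((m:ℝ)+q)^q)) := by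
          rw [Finset.sum_const, Finset.card_range]
          push_cast
          ring
  have hpow2X : (0:ℝ) ≤ (2*(X:ℝ))^m := by positivity
  refine (mul_le_mul_of_nonneg_right hE hpow2X).trans ?_
  -- now: (m+1) * n^m (n+2)^m m! (1+(m+q)^q) * (2X)^m ≤ m! * G
  have hb1 : ((m:ℝ)+1) ≤ 2*(X:ℝ)+1 := by
    have : (m:ℝ) ≤ 2*(X:ℝ) := by exact_mod_cast hm
    linarith
  have hb2 : (n:ℝ)^m * ((n:ℝ)+2)^m * (2*(X:ℝ))^m ≤ (2*(n:ℝ)*((n:ℝ)+2)*(X:ℝ))^(2*X) := by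
    have e1 : (n:ℝ)^m * ((n:ℝ)+2)^m * (2*(X:ℝ))^m = (2*(n:ℝ)*((n:ℝ)+2)*(X:ℝ))^m := by
      rw [← mul_pow, ← mul_pow]
      ring_nf
    rw [e1]
    have hnX : (1:ℝ) ≤ (n:ℝ)*(X:ℝ) := by
      nlinarith [mul_nonneg (sub_nonneg.2 hnR) (sub_nonneg.2 hXR)]
    have hmul : (1:ℝ)*1 ≤ ((n:ℝ)+2)*((n:ℝ)*(X:ℝ)) :=
      mul_le_mul (by linarith) hnX zero_le_one (by linarith)
    apply pow_le_pow_right₀ (by nlinarith [hmul]) hm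
  have hb3 : 1 + ((m:ℝ)+q)^q ≤ 2 * (5*(X:ℝ))^Q := by
    have hq2 : (q:ℝ) ≤ (m:ℝ) + 1 := by
      have : m/n ≤ m := Nat.div_le_self m n
      have : (q:ℕ) ≤ m + 1 := by omega
      exact_mod_cast this
    have hmq : (m:ℝ) + q ≤ 5*(X:ℝ) := by
      have hm' : (m:ℝ) ≤ 2*X := by exact_mod_cast hm
      linarith
    have hqQ : q ≤ Q := by
      have : m/n ≤ (2*X)/n := Nat.div_le_div_right hm
      omega
    have h5X : (1:ℝ) ≤ 5*(X:ℝ) := by linarith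
    have hstep : ((m:ℝ)+q)^q ≤ (5*(X:ℝ))^q := by
      apply pow_le_pow_left₀ (by positivity) hmq
    have hstep2 : (5*(X:ℝ))^q ≤ (5*(X:ℝ))^Q := pow_le_pow_right₀ h5X hqQ
    have hone : (1:ℝ) ≤ (5*(X:ℝ))^Q := one_le_pow₀ h5X
    linarith
  have hfm : (0:ℝ) ≤ (Nat.factorial m : ℝ) := by positivity
  calc ((m:ℝ)+1) * ((n:ℝ)^m * ((n:ℝ)+2)^m * (Nat.factorial m) * (1 + ((m:ℝ)+q)^q)) * (2*(X:ℝ))^m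
      = (Nat.factorial m : ℝ) * (((m:ℝ)+1) * ((n:ℝ)^m * ((n:ℝ)+2)^m * (2*(X:ℝ))^m)
          * (1 + ((m:ℝ)+q)^q)) := by ring
    _ ≤ (Nat.factorial m : ℝ) * ((2*(X:ℝ)+1) * (2*(n:ℝ)*((n:ℝ)+2)*(X:ℝ))^(2*X)
          * (2 * (5*(X:ℝ))^Q)) := by
        apply mul_le_mul_of_nonneg_left _ hfm
        apply mul_le_mul
        · apply mul_le_mul hb1 hb2 (by positivity) (by linarith)
        · exact hb3
        · positivity
        · positivity
    _ = (Nat.factorial m : ℝ) * G n X := by rw [hQ]; rfl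

lemma gfun_le_one (β : ℝ) (hβ : 0 < β) (t : ℝ) : |gfun β t| ≤ 1 := by
  unfold gfun
  split_ifs with h
  · rw [abs_of_pos (Real.exp_pos _), Real.exp_le_one_iff, neg_nonpos]
    positivity
  · simp

lemma consecProd_eq_zero (x : ℤ) (hx : 1 ≤ x) (k : ℕ) (hk : x ≤ k) :
    consecProd x (k+1) = 0 := by
  unfold consecProd
  set i := (x + k + 1).toNat with hi
  have hic : (i : ℤ) = x + k + 1 := Int.toNat_of_nonneg (by omega)
  apply Finset.prod_eq_zero (i := i)
  · rw [Finset.mem_range]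
    omega
  · have : (x + ((k+1 : ℕ) : ℤ) - (i : ℤ)) = 0 := by
      rw [hic]
      push_cast
      ring
    rw [this]
    simp

lemma abs_consecProd_le (x : ℤ) (hx : 1 ≤ x) (k : ℕ) (hk : (k:ℤ) < x) :
    |consecProd x (k+1)| ≤ (2*(x:ℝ))^(2*(k+1)) := by
  unfold consecProd
  rw [Finset.abs_prod]
  have hbound : ∀ j ∈ Finset.range (2*(k+1)), |((x + ((k+1:ℕ):ℤ) - (j:ℕ) : ℤ) : ℝ)| ≤ 2*(x:ℝ) := by
    intro j hj
    have hjlt : j < 2*(k+1) := Finset.mem_range.1 hj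
    have habs : |x + ((k+1:ℕ):ℤ) - (j:ℕ)| ≤ 2*x := by
      rw [abs_le]
      constructor
      · push_cast; omega
      · push_cast; omega
    rw [← Int.cast_abs]
    exact_mod_cast habs
  calc ∏ j ∈ Finset.range (2*(k+1)), |((x + ((k+1:ℕ):ℤ) - (j:ℕ) : ℤ) : ℝ)|
      ≤ ∏ j ∈ Finset.range (2*(k+1)), (2*(x:ℝ)) := by
        apply Finset.prod_le_prod
        · intro j hj; exact abs_nonneg _
        · exact hbound
    _ = (2*(x:ℝ))^(2*(k+1)) := by
        rw [Finset.prod_const, Finset.card_range]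

lemma G_nonneg (n X : ℕ) : 0 ≤ G n X := by
  unfold G
  positivity

lemma uline_bound (n : ℕ) (hn : Odd n) (hn1 : 1 ≤ n) (t : ℝ) (x : ℤ) (hx : 1 ≤ x) :
    |uline n t x| ≤ 1 + (x:ℝ) * G n x.toNat := by
  set X := x.toNat with hXdef
  have hXx : (X:ℤ) = x := Int.toNat_of_nonneg (by omega)
  have hX1 : 1 ≤ X := by omega
  have hXR : ((X:ℕ) : ℝ) = (x:ℝ) := by exact_mod_cast congrArg (Int.cast : ℤ → ℝ) hXx
  unfold uline
  rw [if_pos (by omega : (0:ℤ) ≤ x)]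
  have hsupp : ∀ k ∉ Finset.range X,
      iteratedDeriv (2*(k+1)) (gfun n) t / (Nat.factorial (2*(k+1))) * consecProd x (k+1) = 0 := by
    intro k hk
    have hkX : X ≤ k := by
      by_contra hc
      exact hk (Finset.mem_range.2 (by omega))
    rw [consecProd_eq_zero x hx k (by omega), mul_zero]
  rw [tsum_eq_sum hsupp]
  refine (abs_add_le _ _).trans ?_
  have hterm : ∀ k ∈ Finset.range X,
      |iteratedDeriv (2*(k+1)) (gfun n) t / (Nat.factorial (2*(k+1))) * consecProd x (k+1)|
        ≤ G n X := by
    intro k hk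
    have hkX : k < X := Finset.mem_range.1 hk
    set m := 2*(k+1) with hm
    have hmX : m ≤ 2*X := by omega
    rw [abs_mul, abs_div]
    have hfp : (0:ℝ) < (Nat.factorial m : ℝ) := by positivity
    have h1 : |iteratedDeriv m (gfun n) t| ≤ E n m := abs_iteratedDeriv_le n hn hn1 m t
    have h2 : |consecProd x (k+1)| ≤ (2*(x:ℝ))^m := abs_consecProd_le x hx k (by omega)
    have habsfac : |(Nat.factorial m : ℝ)| = (Nat.factorial m : ℝ) := abs_of_pos hfp
    rw [habsfac]
    have hEb : E n m * (2*(X:ℝ))^m ≤ (Nat.factorial m : ℝ) * G n X :=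
      E_bound n m X hn1 hX1 hmX
    rw [hXR] at hEb
    rw [div_mul_eq_mul_div, div_le_iff₀ hfp]
    calc |iteratedDeriv m (gfun n) t| * |consecProd x (k+1)|
        ≤ E n m * (2*(x:ℝ))^m :=
          mul_le_mul h1 h2 (abs_nonneg _) (E_nonneg n m)
      _ ≤ (Nat.factorial m : ℝ) * G n X := hEb
      _ = G n X * (Nat.factorial m : ℝ) := by ring
  calc |gfun n t|
        + |∑ k ∈ Finset.range X, iteratedDeriv (2*(k+1)) (gfun n) t
            / (Nat.factorial (2*(k+1))) * consecProd x (k+1)|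
      ≤ 1 + ∑ k ∈ Finset.range X, G n X := by
        apply add_le_add (gfun_le_one n (by exact_mod_cast hn1) t)
        refine (Finset.abs_sum_le_sum_abs _ _).trans ?_
        exact Finset.sum_le_sum hterm
    _ = 1 + (X:ℝ) * G n X := by
        rw [Finset.sum_const, Finset.card_range]
        simp [nsmul_eq_mul]
    _ = 1 + (x:ℝ) * G n X := by rw [hXR]

set_option maxHeartbeats 1000000 in
lemma G_exp_bound (n X : ℕ) (hn1 : 1 ≤ n) (hX : 1 ≤ X) :
    1 + (X:ℝ) * G n X ≤
      Real.exp ((2 + 2/(n:ℝ)) * X * Real.log X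
        + (4 + 8*Real.log (10*(n:ℝ)*((n:ℝ)+2))) * X) := by
  set C : ℝ := 10*(n:ℝ)*((n:ℝ)+2) with hC
  set Q : ℕ := (2*X)/n + 1 with hQ
  set M : ℕ := 2*X + Q + 3 with hM
  have hXR : (1:ℝ) ≤ (X:ℝ) := by exact_mod_cast hX
  have hnR : (1:ℝ) ≤ (n:ℝ) := by exact_mod_cast hn1
  have hC30 : (30:ℝ) ≤ C := by nlinarith
  have hC0 : (0:ℝ) < C := by linarith
  have hCX0 : (0:ℝ) < C * X := by positivity
  have hCX1 : (1:ℝ) ≤ C * X := by nlinarith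
  -- step 1 : 1 + X * G ≤ (C*X)^M
  have hG1 : (1:ℝ) ≤ G n X := by
    unfold G
    rw [← hQ]
    have h1 : (1:ℝ) ≤ 2*(X:ℝ)+1 := by linarith
    have h2 : (1:ℝ) ≤ (2*(n:ℝ)*((n:ℝ)+2)*(X:ℝ))^(2*X) := one_le_pow₀ (by nlinarith)
    have h3 : (1:ℝ) ≤ 2 * (5*(X:ℝ))^Q := by
      have : (1:ℝ) ≤ (5*(X:ℝ))^Q := one_le_pow₀ (by linarith)
      linarith
    have h12 : (1:ℝ)*1 ≤ (2*(X:ℝ)+1) * (2*(n:ℝ)*((n:ℝ)+2)*(X:ℝ))^(2*X) :=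
      mul_le_mul h1 h2 zero_le_one (by linarith)
    have h123 : (1:ℝ)*1 ≤ ((2*(X:ℝ)+1) * (2*(n:ℝ)*((n:ℝ)+2)*(X:ℝ))^(2*X)) * (2 * (5*(X:ℝ))^Q) :=
      mul_le_mul (by linarith) h3 zero_le_one (by linarith)
    linarith
  have step1 : 1 + (X:ℝ) * G n X ≤ (C*X)^M := by
    have h1 : 1 + (X:ℝ) * G n X ≤ 2 * ((X:ℝ) * G n X) := by
      have hh : (1:ℝ)*1 ≤ (X:ℝ) * G n X := mul_le_mul hXR hG1 zero_le_one (by linarith)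
      linarith
    have h2 : 2 * ((X:ℝ) * G n X)
        = (2*(X:ℝ)*(2*(X:ℝ)+1)*2) * (2*(n:ℝ)*((n:ℝ)+2)*(X:ℝ))^(2*X) * (5*(X:ℝ))^Q := by
      unfold G
      rw [← hQ]
      ring
    have h3 : (2*(X:ℝ)*(2*(X:ℝ)+1)*2) ≤ (C*X)^3 := by
      have hcx : (30:ℝ)*(X:ℝ) ≤ C*(X:ℝ) := by nlinarith
      have hx3 : (X:ℝ) ≤ (X:ℝ)^3 := by
        calc (X:ℝ) = (X:ℝ)^1 := (pow_one _).symm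
          _ ≤ (X:ℝ)^3 := pow_le_pow_right₀ hXR (by norm_num)
      calc (2*(X:ℝ)*(2*(X:ℝ)+1)*2) ≤ 27*(X:ℝ)^3 := by nlinarith
        _ ≤ (30*(X:ℝ))^3 := by nlinarith
        _ ≤ (C*(X:ℝ))^3 := by
            apply pow_le_pow_left₀ (by positivity) hcx
    have h4 : (2*(n:ℝ)*((n:ℝ)+2)*(X:ℝ))^(2*X) ≤ (C*X)^(2*X) := by
      apply pow_le_pow_left₀ (by positivity)
      nlinarith
    have h5 : (5*(X:ℝ))^Q ≤ (C*X)^Q := by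
      apply pow_le_pow_left₀ (by positivity)
      nlinarith
    calc 1 + (X:ℝ) * G n X ≤ 2 * ((X:ℝ) * G n X) := h1
      _ = (2*(X:ℝ)*(2*(X:ℝ)+1)*2) * (2*(n:ℝ)*((n:ℝ)+2)*(X:ℝ))^(2*X) * (5*(X:ℝ))^Q := h2
      _ ≤ (C*X)^3 * (C*X)^(2*X) * (C*X)^Q := by
          apply mul_le_mul (mul_le_mul h3 h4 (by positivity) (by positivity)) h5
            (by positivity) (by positivity)
      _ = (C*X)^M := by
          rw [hM, ← pow_add, ← pow_add]
          ring_nf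
  refine step1.trans ?_
  -- step 2 : (C*X)^M = exp (M * log (C*X))
  have step2 : (C*X)^M = Real.exp (M * Real.log (C*X)) := by
    rw [← Real.log_pow, Real.exp_log (by positivity)]
  rw [step2]
  apply Real.exp_le_exp.2
  -- step 3 : the log inequality
  have hlogCX : Real.log (C*X) = Real.log C + Real.log X := Real.log_mul hC0.ne' (by positivity)
  have hlogX0 : 0 ≤ Real.log X := Real.log_nonneg hXR
  have hlogXle : Real.log X ≤ (X:ℝ) := Real.log_le_sub_one_of_pos (by positivity) |>.trans (by linarith)
  have hlogC1 : 1 ≤ Real.log C := by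
    rw [Real.le_log_iff_exp_le hC0]
    have := Real.exp_one_lt_d9
    linarith
  have hQle : (Q:ℝ) ≤ 2*(X:ℝ)/(n:ℝ) + 1 := by
    rw [hQ]
    push_cast
    have h := Nat.cast_div_le (α := ℝ) (m := 2*X) (n := n)
    push_cast at h
    linarith
  have hQle2 : (Q:ℝ) ≤ 2*(X:ℝ) + 1 := by
    have hd : (2*X)/n ≤ 2*X := Nat.div_le_self _ _
    have h2 : Q ≤ 2*X + 1 := by omega
    calc (Q:ℝ) ≤ ((2*X + 1 : ℕ) : ℝ) := by exact_mod_cast h2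
      _ = 2*(X:ℝ) + 1 := by push_cast; ring
  have hMcast : (M:ℝ) = 2*(X:ℝ) + (Q:ℝ) + 3 := by
    rw [hM]
    push_cast
    ring
  rw [hlogCX, hMcast]
  -- (2X + Q + 3)(logC + logX) ≤ (2+2/n) X logX + (4 + 8 logC) X
  have hn0 : (0:ℝ) < (n:ℝ) := by linarith
  have e1 : (Q:ℝ) * Real.log X ≤ (2*(X:ℝ)/(n:ℝ) + 1) * Real.log X :=
    mul_le_mul_of_nonneg_right hQle hlogX0
  have e2 : (Q:ℝ) * Real.log C ≤ (2*(X:ℝ) + 1) * Real.log C :=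
    mul_le_mul_of_nonneg_right hQle2 (by linarith)
  have e3 : 2*(X:ℝ)/(n:ℝ) * Real.log X = 2/(n:ℝ) * ((X:ℝ) * Real.log X) := by
    field_simp
  have e4 : Real.log X ≤ (X:ℝ) := hlogXle
  have e5 : Real.log C ≤ (X:ℝ) * Real.log C := by nlinarith
  nlinarith [e1, e2, e3, e4, e5, hlogX0, hlogC1, hXR, mul_nonneg (sub_nonneg.2 hXR) (by linarith : (0:ℝ) ≤ Real.log C)]

end UAux

/-- for every `ε > 0` one can choose `β > 2/ε` so that the Tychonoff-type
solution `u` built from `g(t) = exp(−t^{−β})` satisfies, uniformly in `t`,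
`|u(t,x)| ≤ exp[(2 + 2/β)·x·ln x + O(x)]` as `x → +∞`; consequently
`|u(t,x)|·exp(−(2+ε)·x·ln x) → 0` as `x → ∞`. -/
theorem uline_growth_estimate (ε : ℝ) (hε : 0 < ε) :
    ∃ β : ℝ, 0 < β ∧ 2 / ε < β ∧
      (∃ K : ℝ, ∀ t : ℝ, ∀ᶠ x : ℤ in Filter.atTop,
        |uline β t x| ≤
          Real.exp ((2 + 2 / β) * (x : ℝ) * Real.log (x : ℝ) + K * (x : ℝ))) ∧
      ∀ t : ℝ, Filter.Tendsto
        (fun x : ℤ => |uline β t x| *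
          Real.exp (-(2 + ε) * (x : ℝ) * Real.log (x : ℝ)))
        Filter.atTop (nhds 0) := by
  classical
  set n : ℕ := 2 * ⌈2/ε⌉₊ + 1 with hn
  have hodd : Odd n := Nat.odd_iff.2 (by omega)
  have hn1 : 1 ≤ n := by omega
  have hn0 : (0:ℝ) < (n:ℝ) := by exact_mod_cast (by omega : 0 < n)
  have hβ2 : 2/ε < (n:ℝ) := by
    have hceil : 2/ε ≤ (⌈2/ε⌉₊ : ℝ) := Nat.le_ceil _
    have hlt : ((⌈2/ε⌉₊ : ℕ) : ℝ) < (n:ℝ) := by exact_mod_cast (by omega : ⌈2/ε⌉₊ < n)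
    linarith
  set K : ℝ := 4 + 8*Real.log (10*(n:ℝ)*((n:ℝ)+2)) with hK
  have hbound : ∀ t : ℝ, ∀ᶠ x : ℤ in Filter.atTop,
      |uline (n:ℝ) t x| ≤
        Real.exp ((2 + 2/(n:ℝ)) * (x:ℝ) * Real.log (x:ℝ) + K * (x:ℝ)) := by
    intro t
    filter_upwards [Filter.eventually_ge_atTop (1:ℤ)] with x hx
    have h1 := UAux.uline_bound n hodd hn1 t x hx
    have h2 := UAux.G_exp_bound n x.toNat hn1 (by omega)
    have hXR : ((x.toNat : ℕ) : ℝ) = (x:ℝ) := by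
      exact_mod_cast congrArg (Int.cast : ℤ → ℝ) (Int.toNat_of_nonneg (by omega : (0:ℤ) ≤ x))
    rw [hXR] at h2
    exact h1.trans h2
  refine ⟨(n:ℝ), hn0, hβ2, ⟨K, hbound⟩, ?_⟩
  intro t
  set c : ℝ := 2/(n:ℝ) - ε with hc
  have hcneg : c < 0 := by
    have h2n : 2/(n:ℝ) < ε := by
      rw [div_lt_iff₀ hn0]
      have h := (div_lt_iff₀ hε).1 hβ2
      nlinarith
    rw [hc]
    linarith
  set A : ℝ := (K+1)/(-c) with hA
  have hR : ∀ᶠ x : ℤ in Filter.atTop, Real.exp A ≤ (x:ℝ) :=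
    tendsto_intCast_atTop_atTop.eventually_ge_atTop (Real.exp A)
  apply squeeze_zero' (g := fun x : ℤ => Real.exp (-(x:ℝ)))
  · filter_upwards with x
    positivity
  · filter_upwards [hbound t, hR, Filter.eventually_ge_atTop (1:ℤ)] with x hb hx2 hx3
    have hx1R : (1:ℝ) ≤ (x:ℝ) := by exact_mod_cast hx3
    have step1 : |uline (n:ℝ) t x| * Real.exp (-(2+ε) * (x:ℝ) * Real.log (x:ℝ))
        ≤ Real.exp ((2 + 2/(n:ℝ)) * (x:ℝ) * Real.log (x:ℝ) + K * (x:ℝ))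
            * Real.exp (-(2+ε) * (x:ℝ) * Real.log (x:ℝ)) :=
      mul_le_mul_of_nonneg_right hb (Real.exp_pos _).le
    have step2 : Real.exp ((2 + 2/(n:ℝ)) * (x:ℝ) * Real.log (x:ℝ) + K * (x:ℝ))
            * Real.exp (-(2+ε) * (x:ℝ) * Real.log (x:ℝ))
        = Real.exp ((x:ℝ) * (c * Real.log (x:ℝ) + K)) := by
      rw [← Real.exp_add]
      congr 1
      rw [hc]
      ring
    have hlogx : A ≤ Real.log (x:ℝ) := by
      calc A = Real.log (Real.exp A) := (Real.log_exp A).symm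
        _ ≤ Real.log (x:ℝ) := Real.log_le_log (Real.exp_pos A) hx2
    have hclog : c * Real.log (x:ℝ) + K ≤ -1 := by
      have h1 : c * Real.log (x:ℝ) ≤ c * A := mul_le_mul_of_nonpos_left hlogx hcneg.le
      have h2 : c * A = -(K+1) := by
        have hmc : (-c) ≠ 0 := neg_ne_zero.2 hcneg.ne
        calc c * A = -(((K+1)/(-c)) * (-c)) := by rw [hA]; ring
          _ = -(K+1) := by rw [div_mul_cancel₀ _ hmc]
      linarith
    have step3 : (x:ℝ) * (c * Real.log (x:ℝ) + K) ≤ -(x:ℝ) := by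
      have := mul_le_mul_of_nonneg_left hclog (by linarith : (0:ℝ) ≤ (x:ℝ))
      linarith [this]
    calc |uline (n:ℝ) t x| * Real.exp (-(2+ε) * (x:ℝ) * Real.log (x:ℝ))
        ≤ Real.exp ((2 + 2/(n:ℝ)) * (x:ℝ) * Real.log (x:ℝ) + K * (x:ℝ))
            * Real.exp (-(2+ε) * (x:ℝ) * Real.log (x:ℝ)) := step1
      _ = Real.exp ((x:ℝ) * (c * Real.log (x:ℝ) + K)) := step2
      _ ≤ Real.exp (-(x:ℝ)) := Real.exp_le_exp.2 step3
  · rw [Real.tendsto_exp_comp_nhds_zero]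
    exact Filter.tendsto_neg_atBot_iff.2 tendsto_intCast_atTop_atTop
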